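/- arXiv:1509.02139 — 5 statements merged into one kernel-verified Lean document; each statement's English description precedes it below -/
import Mathlib

section
/- Let k be a perfect field of characteristic p > 0. Every finite subgroup of the group of k-algebra automorphisms of k[[t]] is cyclic mod p, i.e., it has a normal Sylow p-subgroup with cyclic quotient. -/
/-!
Sending `σ` to the coefficient of `t` in `σ(t)` is a homomorphism `Aut(k[[t]]) → kˣ`, whose
kernel is the Nottingham group. If `σ(t) ≡ t + a tⁿ mod tⁿ⁺¹` with `n ≥ 2`, then `σ` fixes every
power series modulo `tⁿ`, and from this one gets `σ^ℓ(t) ≡ t + ℓ a tⁿ mod tⁿ⁺¹`. So `σ^ℓ = 1`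
with `p ∤ ℓ` forces `a = 0`, and inductively `σ(t) = t`: the Nottingham group has no torsion
prime to `p`. For a finite subgroup `G`, the kernel of the restricted homomorphism is therefore
a normal `p`-subgroup, while the quotient embeds in `kˣ`, whose finite subgroups are cyclic and,
as `kˣ` has no element of order `p`, of order prime to `p`.
-/

open PowerSeries

theorem IsPGroup.of_forall_pow_eq_one {H : Type*} [Group H] [Finite H] {p : ℕ} (hp : p.Prime)
    (h : ∀ (g : H) (ℓ : ℕ), ¬ p ∣ ℓ → g ^ ℓ = 1 → g = 1) : IsPGroup p H := by
  have := Fact.mk hp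
  refine IsPGroup.iff_card.2 ⟨_, Nat.eq_prime_pow_of_unique_prime_dvd Nat.card_pos.ne'
    fun {q} hq hqH => ?_⟩
  have := Fact.mk hq
  obtain ⟨g, hg⟩ := exists_prime_orderOf_dvd_card' q hqH
  by_contra hqp
  have hg1 : g = 1 := h g q (fun hpq => hqp ((Nat.prime_dvd_prime_iff_eq hp hq).1 hpq).symm)
    (hg ▸ pow_orderOf_eq_one g)
  rw [hg1, orderOf_one] at hg
  exact hq.one_lt.ne hg

theorem Units.eq_one_of_pow_expChar_eq_one {R : Type*} [CommRing R] [IsReduced R] (p : ℕ)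
    [ExpChar R p] {u : Rˣ} (hu : u ^ p = 1) : u = 1 :=
  Units.ext <| frobenius_inj R p <| by simpa [frobenius_def] using congrArg Units.val hu

theorem not_dvd_card_subgroup_units {R : Type*} [CommRing R] [IsReduced R] (p : ℕ)
    [Fact p.Prime] [CharP R p] (S : Subgroup Rˣ) [Finite S] : ¬ p ∣ Nat.card S := by
  intro hp
  obtain ⟨u, hu⟩ := exists_prime_orderOf_dvd_card' p hp
  have hu1 : u = 1 := Subtype.ext <| Units.eq_one_of_pow_expChar_eq_one p <| by
    exact_mod_cast congrArg Subtype.val (hu ▸ pow_orderOf_eq_one u)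
  rw [hu1, orderOf_one] at hu
  exact (Fact.out : p.Prime).one_lt.ne hu

namespace PowerSeries

theorem eq_zero_of_forall_X_pow_dvd {R : Type*} [CommRing R] {f : R⟦X⟧}
    (h : ∀ n, X ^ n ∣ f) : f = 0 :=
  ext fun m => X_pow_dvd_iff.1 (h (m + 1)) m m.lt_succ_self

section CommRing

variable {R : Type*} [CommRing R] (σ : R⟦X⟧ ≃ₐ[R] R⟦X⟧)

@[simp]
theorem algEquiv_apply_C (a : R) : σ (C a) = C a := σ.commutes a

theorem X_pow_dvd_algEquiv_apply_sub_self {n : ℕ} (hσ : X ^ n ∣ σ X - X) (f : R⟦X⟧) :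
    X ^ n ∣ σ f - f := by
  induction n generalizing f with
  | zero => simp
  | succ n ih =>
    set g : R⟦X⟧ := mk fun m => coeff (m + 1) f
    have hf : σ f - f = (σ X - X) * σ g + X * (σ g - g) := by
      rw [eq_X_mul_shift_add_const f, map_add, map_mul, algEquiv_apply_C]; ring
    rw [hf]
    refine dvd_add (hσ.mul_right _) ?_
    rw [pow_succ']
    exact mul_dvd_mul_left X (ih ((pow_dvd_pow X n.le_succ).trans hσ) g)

theorem algEquiv_eq_one_of_apply_X_eq (h : σ X = X) : σ = 1 :=
  AlgEquiv.ext fun f => sub_eq_zero.1 <| eq_zero_of_forall_X_pow_dvd fun n =>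
    X_pow_dvd_algEquiv_apply_sub_self σ (by simp [h]) f

variable {σ}

theorem X_pow_succ_dvd_algEquiv_apply_sub_self {n : ℕ} (hn : 2 ≤ n) (hσ : X ^ n ∣ σ X - X)
    {f : R⟦X⟧} (hf : X ^ n ∣ f) : X ^ (n + 1) ∣ σ f - f := by
  obtain ⟨u, hu⟩ := hσ
  obtain ⟨g, rfl⟩ := hf
  have hX : (X : R⟦X⟧) ^ n = X * X ^ (n - 1) := by
    rw [← pow_succ', Nat.sub_add_cancel (by omega)]
  have hσX : σ X = X * (1 + X ^ (n - 1) * u) := by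
    rw [← sub_add_cancel (σ X) X, hu, hX]; ring
  -- `σ(Xⁿ) - Xⁿ` is divisible by `X^(2n-1)`, and `2n - 1 ≥ n + 1`.
  have hσf : σ (X ^ n * g) - X ^ n * g =
      X ^ n * (((1 + X ^ (n - 1) * u) ^ n - 1 ^ n) * σ g + (σ g - g)) := by
    rw [map_mul, map_pow, hσX, mul_pow]; ring
  rw [hσf, pow_succ]
  refine mul_dvd_mul_left _ (dvd_add (Dvd.dvd.mul_right ?_ _) ?_)
  · refine (dvd_pow_self X (by omega : n - 1 ≠ 0)).trans ((dvd_mul_right _ u).trans ?_)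
    convert sub_dvd_pow_sub_pow (1 + X ^ (n - 1) * u) 1 n using 1
    ring
  · refine pow_one (X : R⟦X⟧) ▸ X_pow_dvd_algEquiv_apply_sub_self σ ?_ g
    exact (pow_dvd_pow X (by omega)).trans ⟨u, hu⟩

theorem X_pow_succ_dvd_pow_apply_X_sub {n : ℕ} (hn : 2 ≤ n) (hσ : X ^ n ∣ σ X - X)
    (j : ℕ) : X ^ (n + 1) ∣ (σ ^ j) X - X - j • (σ X - X) := by
  induction j with
  | zero => simp
  | succ j ih =>
    have hσj : X ^ n ∣ (σ ^ j) X - X := by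
      rw [← sub_add_cancel ((σ ^ j) X - X) (j • (σ X - X))]
      exact dvd_add ((pow_dvd_pow X n.le_succ).trans ih) (dvd_nsmul_of_dvd j hσ)
    have hsplit : (σ ^ (j + 1)) X - X - (j + 1) • (σ X - X) =
        ((σ ^ j) (σ X - X) - (σ X - X)) + ((σ ^ j) X - X - j • (σ X - X)) := by
      rw [pow_succ, AlgEquiv.mul_apply, map_sub, add_nsmul, one_nsmul]; abel
    rw [hsplit]
    exact dvd_add (X_pow_succ_dvd_algEquiv_apply_sub_self hn hσj hσ) ih

theorem X_pow_succ_dvd_apply_X_sub_of_pow_eq_one {n ℓ : ℕ} (hn : 2 ≤ n)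
    (hσ : X ^ n ∣ σ X - X) (hℓ : IsUnit (ℓ : R)) (hσℓ : σ ^ ℓ = 1) :
    X ^ (n + 1) ∣ σ X - X := by
  have h := X_pow_succ_dvd_pow_apply_X_sub hn hσ ℓ
  rwa [hσℓ, AlgEquiv.one_apply, sub_self, zero_sub, dvd_neg, nsmul_eq_mul, ← map_natCast C,
    (hℓ.map C).dvd_mul_left] at h

theorem algEquiv_eq_one_of_pow_eq_one {ℓ : ℕ} (hσ : X ^ 2 ∣ σ X - X) (hℓ : IsUnit (ℓ : R))
    (hσℓ : σ ^ ℓ = 1) : σ = 1 := by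
  have hge : ∀ n, 2 ≤ n → X ^ n ∣ σ X - X := fun n hn => Nat.le_induction hσ
    (fun m hm ih => X_pow_succ_dvd_apply_X_sub_of_pow_eq_one hm ih hℓ hσℓ) n hn
  refine algEquiv_eq_one_of_apply_X_eq σ <| sub_eq_zero.1 <|
    eq_zero_of_forall_X_pow_dvd fun n => ?_
  exact (pow_dvd_pow X (le_max_left n 2)).trans (hge _ (le_max_right n 2))

end CommRing

section Field

variable {k : Type*} [Field k] (σ : k⟦X⟧ ≃ₐ[k] k⟦X⟧)

theorem constantCoeff_algEquiv_apply_X : constantCoeff (σ X) = 0 := by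
  by_contra h
  have hX : IsUnit (σ.symm (σ X)) :=
    (isUnit_iff_constantCoeff.2 (isUnit_iff_ne_zero.2 h)).map _
  simpa using isUnit_constantCoeff _ hX

theorem X_dvd_algEquiv_apply_X : X ∣ σ X := X_dvd_iff.2 (constantCoeff_algEquiv_apply_X σ)

theorem constantCoeff_algEquiv_apply (f : k⟦X⟧) : constantCoeff (σ f) = constantCoeff f := by
  have hσ : X ^ 1 ∣ σ X - X := by
    simpa using dvd_sub (X_dvd_algEquiv_apply_X σ) (dvd_refl X)
  rw [← sub_eq_zero, ← map_sub]
  exact X_dvd_iff.1 (pow_one (X : k⟦X⟧) ▸ X_pow_dvd_algEquiv_apply_sub_self σ hσ f)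

@[simps]
noncomputable def linearCoeffHom : (k⟦X⟧ ≃ₐ[k] k⟦X⟧) →* k where
  toFun σ := coeff 1 (σ X)
  map_one' := by simp
  map_mul' σ τ := by
    obtain ⟨v, hv⟩ := X_dvd_algEquiv_apply_X σ
    obtain ⟨w, hw⟩ := X_dvd_algEquiv_apply_X τ
    simp only [AlgEquiv.mul_apply, hw, map_mul, hv, mul_assoc, coeff_succ_X_mul 0,
      coeff_zero_eq_constantCoeff_apply, map_mul, constantCoeff_algEquiv_apply]

theorem X_sq_dvd_apply_X_sub_X {σ : k⟦X⟧ ≃ₐ[k] k⟦X⟧} (h : linearCoeffHom σ = 1) :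
    X ^ 2 ∣ σ X - X := by
  refine X_pow_dvd_iff.2 fun m hm => ?_
  interval_cases m
  · simp [constantCoeff_algEquiv_apply_X]
  · simpa [sub_eq_zero] using h

end Field

end PowerSeries

theorem finite_subgroup_aut_powerSeries_cyclic_mod_p_general
    (k : Type*) [Field k] (p : ℕ) [Fact p.Prime] [CharP k p]
    (G : Subgroup (PowerSeries k ≃ₐ[k] PowerSeries k)) [Finite G] :
    ∃ (P : Subgroup G) (h : P.Normal), IsPGroup p P ∧ ¬ p ∣ P.index ∧
      (letI := h; IsCyclic (G ⧸ P)) := by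
  set φ : G →* kˣ := linearCoeffHom.toHomUnits.comp G.subtype
  have : Finite φ.range := Finite.of_surjective _ φ.rangeRestrict_surjective
  refine ⟨φ.ker, φ.normal_ker, ?_, ?_,
    (QuotientGroup.quotientKerEquivRange φ).isCyclic.2 inferInstance⟩
  · refine IsPGroup.of_forall_pow_eq_one Fact.out fun σ ℓ hpℓ hσℓ => ?_
    have hℓ : IsUnit (ℓ : k) := Ne.isUnit ((CharP.cast_eq_zero_iff k p ℓ).not.2 hpℓ)
    have hσ : X ^ 2 ∣ (σ : G).1 X - X := X_sq_dvd_apply_X_sub_X (congrArg Units.val σ.2)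
    exact Subtype.ext <| Subtype.ext <|
      algEquiv_eq_one_of_pow_eq_one hσ hℓ (by exact_mod_cast congrArg (fun τ => τ.1.1) hσℓ)
  · rw [Subgroup.index_ker]
    exact not_dvd_card_subgroup_units p φ.range

/-- Let `k` be a perfect field of characteristic `p > 0`.  Every finite
subgroup `G` of the group of `k`-algebra automorphisms of `k[[t]]` is cyclic mod `p`:
it has a normal Sylow `p`-subgroup (a normal `p`-subgroup of index prime to `p`)
whose quotient is cyclic. -/
theorem finite_subgroup_aut_powerSeries_cyclic_mod_p
    (k : Type*) [Field k] (p : ℕ) [Fact p.Prime] [CharP k p] [PerfectField k]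
    (G : Subgroup (PowerSeries k ≃ₐ[k] PowerSeries k)) [Finite G] :
    ∃ (P : Subgroup G) (h : P.Normal), IsPGroup p P ∧ ¬ p ∣ P.index ∧
      (letI := h; IsCyclic (G ⧸ P)) :=
  finite_subgroup_aut_powerSeries_cyclic_mod_p_general k p G
end

section
/- Let k be a perfect field of characteristic p > 0. The set of k-algebra automorphisms σ of k[[t]] such that σ(t) is algebraic over the subfield k(t) of k((t)) forms a subgroup of Aut(k[[t]]). -/
/-!
Extend `σ` to a `k`-automorphism `σ̃` of `k((t))`. An element of `k((t))` is algebraic over `k(t)`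
exactly when it lies in the closure of `{t}` in the algebraic matroid of `k((t))` over `k`, and
`k`-automorphisms commute with the closure operator of that matroid. So if `σ t, τ t ∈ cl {t}`,
then `(σ τ) t = σ̃ (τ t) ∈ cl {σ t} ⊆ cl {t}`. For inverses, the exchange property turns
`σ t ∈ cl {t}` into `t ∈ cl {σ t}`, and applying `σ̃⁻¹` gives `σ⁻¹ t ∈ cl {t}`.
-/

open scoped RatFunc LaurentSeries PowerSeries

namespace AlgebraicIndependent

variable {R A : Type*} [CommRing R] [CommRing A] [Algebra R A] [FaithfulSMul R A] [IsDomain A]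

theorem mem_matroid_closure_iff {s : Set A} {a : A} :
    a ∈ (matroid R A).closure s ↔ IsAlgebraic (Algebra.adjoin R s) a := by
  rw [matroid_closure_eq]
  rfl

theorem map_mem_matroid_closure_image {B : Type*} [CommRing B] [Algebra R B] [FaithfulSMul R B]
    [IsDomain B] (φ : A ≃ₐ[R] B) {s : Set A} {a : A} (h : a ∈ (matroid R A).closure s) :
    φ a ∈ (matroid R B).closure (φ '' s) := by
  rw [mem_matroid_closure_iff] at h ⊢
  let f : Algebra.adjoin R s ≃ₐ[R] Algebra.adjoin R (φ '' s) :=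
    (φ.subalgebraMap _).trans (Subalgebra.equivOfEq _ _ (AlgHom.map_adjoin φ.toAlgHom s))
  exact h.ringHom_of_comp_eq f φ f.injective (RingHom.ext fun _ => rfl)

theorem mem_matroid_closure_singleton_of_map_mem (φ : A ≃ₐ[R] A) {x : A}
    (h : φ x ∈ (matroid R A).closure {x}) : x ∈ (matroid R A).closure {φ x} := by
  by_cases hφx : φ x ∈ (matroid R A).closure ∅
  · have hx : x ∈ (matroid R A).closure ∅ := by
      simpa using map_mem_matroid_closure_image φ.symm hφx
    exact (matroid R A).closure_mono (Set.empty_subset _) hx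
  · simpa using (matroid R A).mem_closure_insert hφx (by simpa using h)

variable (R) in
def algebraicAutSubgroup (x : A) : Subgroup (A ≃ₐ[R] A) where
  carrier := {φ | φ x ∈ (matroid R A).closure {x}}
  one_mem' := (matroid R A).mem_closure_of_mem rfl
  mul_mem' {φ ψ} hφ hψ := by
    have hφψ := map_mem_matroid_closure_image φ hψ
    rw [Set.image_singleton] at hφψ
    exact (matroid R A).closure_subset_closure_of_subset_closure
      (Set.singleton_subset_iff.2 hφ) hφψ
  inv_mem' {φ} hφ := by
    simpa using map_mem_matroid_closure_image φ.symm
      (mem_matroid_closure_singleton_of_map_mem φ hφ)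

theorem mem_algebraicAutSubgroup {x : A} {φ : A ≃ₐ[R] A} :
    φ ∈ algebraicAutSubgroup R x ↔ φ x ∈ (matroid R A).closure {x} :=
  Iff.rfl

end AlgebraicIndependent

namespace LaurentSeries

variable {k : Type*} [Field k]

/- `k` acts on `k⸨X⸩` both coefficientwise and through the algebra structure, which factors
through `k⟦X⟧`; the two actions are not definitionally equal, and these instances concern the
second. -/

instance : @IsScalarTower k k⟦X⟧ k⸨X⸩ Algebra.toSMul Algebra.toSMul Algebra.toSMul :=
  IsScalarTower.of_algebraMap_eq' rfl

instance : @IsScalarTower k k k⸨X⸩ Algebra.toSMul Algebra.toSMul Algebra.toSMul :=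
  IsScalarTower.of_algebraMap_eq' rfl

instance : @IsScalarTower k (RatFunc k) k⸨X⸩ Algebra.toSMul Algebra.toSMul Algebra.toSMul :=
  IsScalarTower.of_algebraMap_eq fun a => by
    rw [IsScalarTower.algebraMap_apply k (Polynomial k) (RatFunc k),
      ← IsScalarTower.algebraMap_apply (Polynomial k) (RatFunc k),
      Polynomial.algebraMap_hahnSeries_apply]
    simp [HahnSeries.algebraMap_apply']

instance : @FaithfulSMul k k⸨X⸩ Algebra.toSMul :=
  (faithfulSMul_iff_algebraMap_injective k k⸨X⸩).2 (algebraMap k k⸨X⸩).injective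

theorem algebraMap_ratFunc_X :
    algebraMap (RatFunc k) k⸨X⸩ RatFunc.X = ((PowerSeries.X : k⟦X⟧) : k⸨X⸩) := by
  rw [← RatFunc.algebraMap_X]
  simp

theorem fieldRange_algebraMap_ratFunc :
    (IsScalarTower.toAlgHom k (RatFunc k) k⸨X⸩).fieldRange =
      IntermediateField.adjoin k {((PowerSeries.X : k⟦X⟧) : k⸨X⸩)} := by
  rw [AlgHom.fieldRange_eq_map, ← RatFunc.adjoin_X, IntermediateField.adjoin_map,
    Set.image_singleton, IsScalarTower.coe_toAlgHom', algebraMap_ratFunc_X]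

theorem isAlgebraic_ratFunc_iff_mem_matroid_closure (y : k⸨X⸩) :
    IsAlgebraic (RatFunc k) y ↔
      y ∈ (AlgebraicIndependent.matroid k k⸨X⸩).closure {((PowerSeries.X : k⟦X⟧) : k⸨X⸩)} := by
  rw [AlgebraicIndependent.mem_matroid_closure_iff, ← IntermediateField.isAlgebraic_adjoin_iff,
    ← fieldRange_algebraMap_ratFunc]
  exact (isAlgebraic_ringHom_iff_of_comp_eq
    (AlgEquiv.ofInjectiveField (IsScalarTower.toAlgHom k (RatFunc k) k⸨X⸩)) (RingHom.id _)
    Function.injective_id rfl).symm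

end LaurentSeries

theorem algebraic_automorphisms_form_subgroup_general
    (k : Type*) [Field k] :
    ∃ S : Subgroup (PowerSeries k ≃ₐ[k] PowerSeries k),
      ∀ σ : PowerSeries k ≃ₐ[k] PowerSeries k,
        σ ∈ S ↔ IsAlgebraic (RatFunc k)
          ((σ PowerSeries.X : PowerSeries k) : LaurentSeries k) := by
  refine ⟨(AlgebraicIndependent.algebraicAutSubgroup k ((PowerSeries.X : k⟦X⟧) : k⸨X⸩)).comap
    (IsFractionRing.fieldEquivOfAlgEquivHom k k⸨X⸩), fun σ => ?_⟩
  have hσX : IsFractionRing.fieldEquivOfAlgEquivHom k k⸨X⸩ σ (PowerSeries.X : k⟦X⟧) =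
      ((σ PowerSeries.X : k⟦X⟧) : k⸨X⸩) :=
    IsFractionRing.fieldEquivOfAlgEquiv_algebraMap _ _ _ σ _
  rw [Subgroup.mem_comap, AlgebraicIndependent.mem_algebraicAutSubgroup, hσX,
    LaurentSeries.isAlgebraic_ratFunc_iff_mem_matroid_closure]

/-- Let `k` be a perfect field of characteristic `p > 0`.  The set of
`k`-algebra automorphisms `σ` of `k[[t]]` such that `σ(t)` is algebraic over the
subfield `k(t)` of `k((t))` forms a subgroup of `Aut(k[[t]])`.  Here `k(t)` is the
field of rational functions `RatFunc k`, embedded in the Laurent series field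
`k((t)) = LaurentSeries k`, and `σ(t) ∈ k[[t]] ⊆ k((t))`. -/
theorem algebraic_automorphisms_form_subgroup
    (k : Type*) [Field k] (p : ℕ) [Fact p.Prime] [CharP k p] [PerfectField k] :
    ∃ S : Subgroup (PowerSeries k ≃ₐ[k] PowerSeries k),
      ∀ σ : PowerSeries k ≃ₐ[k] PowerSeries k,
        σ ∈ S ↔ IsAlgebraic (RatFunc k)
          ((σ PowerSeries.X : PowerSeries k) : LaurentSeries k) :=
  algebraic_automorphisms_form_subgroup_general k
end

section
/- Let p be a prime and G a finite group with a normal Sylow p-subgroup P such that G/P is cyclic. Then, for a given overgroup J ⊇ G, the p'-subgroups of G that are normal in J generate a unique maximal one, and this maximal one is cyclic and central in G. -/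
private lemma card_sup_dvd_mul {J : Type*} [Group J] [Finite J] (H K : Subgroup J)
    [K.Normal] : Nat.card (H ⊔ K : Subgroup J) ∣ Nat.card H * Nat.card K := by
  have h1 := Subgroup.card_eq_card_quotient_mul_card_subgroup (K.subgroupOf (H ⊔ K))
  have h2 : Nat.card (↥(H ⊔ K) ⧸ K.subgroupOf (H ⊔ K)) = K.relIndex H := by
    rw [← Subgroup.relIndex_sup_right]; rfl
  have h3 : Nat.card (K.subgroupOf (H ⊔ K)) = Nat.card K :=
    Nat.card_congr (Subgroup.subgroupOfEquivOfLe le_sup_right).toEquiv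
  rw [h1, h2, h3]
  exact Nat.mul_dvd_mul_right (Subgroup.index_dvd_card (K.subgroupOf H)) _

/-- Lemma 5.3, group-theoretic form: Let `J` be a finite group and
`G ≤ J` a subgroup that is cyclic mod `p`: `G` has a normal Sylow `p`-subgroup `P`
(a normal `p`-subgroup with `p` not dividing the order of the quotient) with `G/P`
cyclic.  Let `C` be the subgroup of `J` generated by all `p'`-subgroups of `G` that
are normal in `J`.  Then `C` is the unique maximal such subgroup:  `C ≤ G`, `C` is
normal in `J`, `C` is a `p'`-group, `C` is cyclic, and `C` is central in `G`. -/
theorem maximal_normal_p_prime_subgroup_cyclic_central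
    (p : ℕ) [Fact p.Prime] (J : Type*) [Group J] [Finite J]
    (G P : Subgroup J) (hPG : P ≤ G) (hP : IsPGroup p P)
    (hPn : (P.subgroupOf G).Normal)
    (hsyl : ¬ p ∣ Nat.card (G ⧸ P.subgroupOf G))
    (hcyc : IsCyclic (G ⧸ P.subgroupOf G))
    (C : Subgroup J)
    (hC : C = ⨆ (H : Subgroup J) (_ : H ≤ G) (_ : H.Normal)
        (_ : (Nat.card H).Coprime p), H) :
    C ≤ G ∧ C.Normal ∧ (Nat.card C).Coprime p ∧ IsCyclic C ∧
      ∀ c ∈ C, ∀ g ∈ G, c * g = g * c := by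
  classical
  set S : Set (Subgroup J) := {H | H ≤ G ∧ H.Normal ∧ (Nat.card H).Coprime p} with hS
  have hbot : (⊥ : Subgroup J) ∈ S := ⟨bot_le, inferInstance, by simp⟩
  have hsup : ∀ H ∈ S, ∀ K ∈ S, H ⊔ K ∈ S := by
    rintro H ⟨hHG, hHn, hHp⟩ K ⟨hKG, hKn, hKp⟩
    haveI := hHn; haveI := hKn
    refine ⟨sup_le hHG hKG, inferInstance, ?_⟩
    exact Nat.Coprime.coprime_dvd_left (card_sup_dvd_mul H K) (Nat.Coprime.mul hHp hKp)
  obtain ⟨D, hD, hDmax'⟩ := Set.Finite.exists_maximalFor id S (Set.toFinite S) ⟨⊥, hbot⟩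
  have hDmax : ∀ a' ∈ S, id D ≤ id a' → id D = id a' := fun a' ha' hle =>
    le_antisymm hle (hDmax' ha' hle)
  have hmax : ∀ H ∈ S, H ≤ D := by
    intro H hH
    have h := hDmax _ (hsup H hH D hD) le_sup_right
    calc H ≤ H ⊔ D := le_sup_left
    _ = D := (congrArg id h).symm
  have hCD : C = D := by
    rw [hC]
    apply le_antisymm
    · exact iSup_le fun H => iSup_le fun h1 => iSup_le fun h2 => iSup_le fun h3 =>
        hmax H ⟨h1, h2, h3⟩
    · obtain ⟨h1, h2, h3⟩ := hD
      exact le_iSup_of_le D (le_iSup_of_le h1 (le_iSup_of_le h2 (le_iSup_of_le h3 le_rfl)))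
  have hCS : C ∈ S := hCD ▸ hD
  obtain ⟨hCG, hCn, hCp⟩ := hCS
  -- C ⊓ P is trivial
  have hCP : C ⊓ P = ⊥ := by
    have hpg : IsPGroup p (↥(C ⊓ P)) := hP.to_le inf_le_right
    obtain ⟨n, hn⟩ := IsPGroup.iff_card.mp hpg
    have hdvd : Nat.card (↥(C ⊓ P)) ∣ Nat.card C := Subgroup.card_dvd_of_le inf_le_left
    rw [hn] at hdvd
    have hone : Nat.card (↥(C ⊓ P)) = 1 := by
      rw [hn]
      rcases Nat.eq_zero_or_pos n with h0 | h0
      · simp [h0]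
      · exfalso
        have hpc : p ∣ Nat.card C := dvd_trans (dvd_pow_self p h0.ne') hdvd
        have := Nat.Coprime.eq_one_of_dvd hCp.symm hpc
        exact (Fact.out : p.Prime).one_lt.ne' this
    exact Subgroup.eq_bot_of_card_eq _ hone
  -- commutativity of the quotient
  have hcomm : ∀ a b : G ⧸ P.subgroupOf G, a * b = b * a := by
    intro a b
    letI := hcyc.commGroup
    exact mul_comm a b
  -- commutator lands in C ⊓ P
  have hkey : ∀ c ∈ C, ∀ g ∈ G, g * c * g⁻¹ * c⁻¹ = 1 := by
    intro c hc g hg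
    have hcG : c ∈ G := hCG hc
    set c' : G := ⟨c, hcG⟩
    set g' : G := ⟨g, hg⟩
    have hxC : g * c * g⁻¹ * c⁻¹ ∈ C :=
      mul_mem (hCn.conj_mem c hc g) (inv_mem hc)
    have hxP : g * c * g⁻¹ * c⁻¹ ∈ P := by
      have h1 : (QuotientGroup.mk (g' * c' * g'⁻¹ * c'⁻¹) :
          G ⧸ P.subgroupOf G) = 1 := by
        have : (QuotientGroup.mk (g' * c' * g'⁻¹ * c'⁻¹) :
            G ⧸ P.subgroupOf G) = QuotientGroup.mk g' * QuotientGroup.mk c' *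
            (QuotientGroup.mk g')⁻¹ * (QuotientGroup.mk c')⁻¹ := rfl
        rw [this, hcomm (QuotientGroup.mk g') (QuotientGroup.mk c')]
        group
      have h2 : g' * c' * g'⁻¹ * c'⁻¹ ∈ P.subgroupOf G :=
        (QuotientGroup.eq_one_iff _).mp h1
      simpa [Subgroup.mem_subgroupOf, c', g'] using h2
    have : g * c * g⁻¹ * c⁻¹ ∈ C ⊓ P := ⟨hxC, hxP⟩
    rw [hCP] at this
    exact this
  have hcentral : ∀ c ∈ C, ∀ g ∈ G, c * g = g * c := by
    intro c hc g hg
    have h := hkey c hc g hg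
    have h2 : g * c * g⁻¹ = c := mul_inv_eq_one.mp h
    calc c * g = (g * c * g⁻¹) * g := by rw [h2]
    _ = g * c := by group
  -- cyclicity: C embeds into the cyclic quotient
  have hcyclic : IsCyclic C := by
    set f : ↥C →* G ⧸ P.subgroupOf G :=
      (QuotientGroup.mk' (P.subgroupOf G)).comp (Subgroup.inclusion hCG)
    have hinj : Function.Injective f := by
      rw [← MonoidHom.ker_eq_bot_iff, eq_bot_iff]
      intro x hx
      have hx1 : (Subgroup.inclusion hCG x : G) ∈ P.subgroupOf G :=
        (QuotientGroup.eq_one_iff _).mp hx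
      have hxP : (x : J) ∈ P := hx1
      have hxCP : (x : J) ∈ C ⊓ P := ⟨x.2, hxP⟩
      rw [hCP, Subgroup.mem_bot] at hxCP
      simpa [Subgroup.mem_bot] using Subtype.ext hxCP
    haveI : IsCyclic f.range := Subgroup.isCyclic _
    exact isCyclic_of_surjective (MonoidHom.ofInjective hinj).symm
      (MonoidHom.ofInjective hinj).symm.surjective
  exact ⟨hCG, hCn, hCp, hcyclic, hcentral⟩
end

section
/- Let k be a field of characteristic 2, a, b ∈ k, and let E be the projective plane curve which is the closure of z² - z = w³ + (b²+b+1)w² + a. Then E is a smooth curve of genus 1, and the map σ(w,z) = (w+1, z+w+b) is an automorphism of E of order exactly 4 fixing the point at infinity. -/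
/-- Let `k` be a field of characteristic 2 and `a, b ∈ k`.  The projective
closure `E` of `z² - z = w³ + (b²+b+1)w² + a` is a smooth curve of genus 1 (i.e. the
corresponding Weierstrass curve is nonsingular: its discriminant is nonzero), and the
map `σ(w,z) = (w+1, z+w+b)` is an automorphism of `E` of order exactly 4 fixing the
point at infinity: it maps affine points of `E` to affine points of `E` (hence fixes
the point at infinity), its 4th iterate is the identity, and its square is not. -/
theorem weierstrass_char_two_order_four_automorphism
    (k : Type*) [Field k] [CharP k 2] (a b : k) :
    let W : WeierstrassCurve k :=
      { a₁ := 0, a₂ := b ^ 2 + b + 1, a₃ := 1, a₄ := 0, a₆ := a }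
    let f : k × k → k × k := fun P => (P.1 + 1, P.2 + P.1 + b)
    W.Δ ≠ 0 ∧
    (∀ P : k × k, W.toAffine.Equation P.1 P.2 →
        W.toAffine.Equation (f P).1 (f P).2) ∧
    f^[4] = id ∧ f^[2] ≠ id := by
  intro W f
  have h2 : (2 : k) = 0 := by exact_mod_cast CharP.cast_eq_zero k 2
  refine ⟨?_, ?_, ?_, ?_⟩
  · have : W.Δ = 1 := by
      simp only [W, WeierstrassCurve.Δ, WeierstrassCurve.b₂, WeierstrassCurve.b₄,
        WeierstrassCurve.b₆, WeierstrassCurve.b₈]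
      ring_nf
      linear_combination (-(b^4) * 2 - b^3 * 6 - b^2 * 7 - b * 4 - 14 +
        (-8 - 20*b - 96*a*b - 41*b^2 - 192*a*b^2 - 50*b^3 - 224*a*b^3 - 46*b^4 -
          192*a*b^4 - 24*b^5 - 96*a*b^5 - 8*b^6 - 32*a*b^6 - 140*a - 216*a^2)) * h2
    rw [this]
    exact one_ne_zero
  · intro P hP
    rw [WeierstrassCurve.Affine.equation_iff] at hP ⊢
    simp only [W, f] at hP ⊢
    linear_combination hP + (P.2 + P.1^2 + P.1 * b + b^2 + b * P.1 + b^2 + b - 1 - P.2 + P.2*P.1 + P.2*b - 2*P.1 - 2*P.1*b - P.1*b^2 - 2*P.1^2 - b - 2*b^2) * h2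
  · funext P
    simp only [Function.iterate_succ, Function.iterate_zero, Function.comp_apply, id_eq, f]
    ext
    · simp; linear_combination 2 * h2
    · simp; linear_combination (2*P.1 + 2*b + 3) * h2
  · intro h
    have := congrFun h (0, 1)
    simp only [Function.iterate_succ, Function.iterate_zero, Function.comp_apply, id_eq, f] at this
    have h2' := congrArg Prod.snd this
    simp at h2'
    -- h2' : 1 + 0 + b + (0 + 1) + b = 1  hopefully
    apply one_ne_zero (α := k)
    linear_combination h2' - b * h2
end

section
/- For a prime p ≥ 2 and n ≥ 2, the inequality p ≥ 1 + sqrt(p(p^n - 1)(p^{n-1} - 1)/(2(p+1))) holds if and only if p = 2 and n = 2. -/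
/-- For a prime `p` and `n ≥ 2`, the inequality
`p ≥ 1 + sqrt(p(p^n - 1)(p^{n-1} - 1)/(2(p+1)))` holds if and only if
`p = 2` and `n = 2`. -/
theorem numerical_inequality_iff_p2_n2 (p n : ℕ) (hp : p.Prime) (hn : 2 ≤ n) :
    ((p : ℝ) ≥ 1 + Real.sqrt ((p : ℝ) * ((p : ℝ) ^ n - 1) * ((p : ℝ) ^ (n - 1) - 1)
        / (2 * ((p : ℝ) + 1)))) ↔ (p = 2 ∧ n = 2) := by
  have hp2 : (2 : ℝ) ≤ (p : ℝ) := by exact_mod_cast hp.two_le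
  have hpow1 : (p : ℝ) ^ 2 ≤ (p : ℝ) ^ n := pow_le_pow_right₀ (by linarith) hn
  have hpow2 : (p : ℝ) ^ 1 ≤ (p : ℝ) ^ (n - 1) :=
    pow_le_pow_right₀ (by linarith) (by omega)
  have hXnn : 0 ≤ (p : ℝ) * ((p : ℝ) ^ n - 1) * ((p : ℝ) ^ (n - 1) - 1)
      / (2 * ((p : ℝ) + 1)) := by
    apply div_nonneg
    · apply mul_nonneg (mul_nonneg (by linarith) (by nlinarith)) (by nlinarith)
    · linarith
  constructor
  · intro h
    have h1 : Real.sqrt ((p : ℝ) * ((p : ℝ) ^ n - 1) * ((p : ℝ) ^ (n - 1) - 1)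
        / (2 * ((p : ℝ) + 1))) ≤ (p : ℝ) - 1 := by linarith
    have hX : (p : ℝ) * ((p : ℝ) ^ n - 1) * ((p : ℝ) ^ (n - 1) - 1)
        / (2 * ((p : ℝ) + 1)) ≤ ((p : ℝ) - 1) ^ 2 := by
      have := Real.sq_sqrt hXnn
      nlinarith [Real.sqrt_nonneg ((p : ℝ) * ((p : ℝ) ^ n - 1) * ((p : ℝ) ^ (n - 1) - 1)
        / (2 * ((p : ℝ) + 1)))]
    have hle : (p : ℝ) * ((p : ℝ) ^ n - 1) * ((p : ℝ) ^ (n - 1) - 1)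
        ≤ 2 * ((p : ℝ) + 1) * ((p : ℝ) - 1) ^ 2 := by
      rw [div_le_iff₀ (by linarith)] at hX
      linarith
    have hp2' : p = 2 := by
      by_contra hne
      have hp3 : (3 : ℝ) ≤ (p : ℝ) := by
        have h2 := hp.two_le
        have : 3 ≤ p := by omega
        exact_mod_cast this
      have hmono : (p : ℝ) * ((p : ℝ) ^ 2 - 1) * ((p : ℝ) ^ 1 - 1)
          ≤ (p : ℝ) * ((p : ℝ) ^ n - 1) * ((p : ℝ) ^ (n - 1) - 1) := by
        gcongr <;> nlinarith
      nlinarith [mul_nonneg (mul_nonneg (by linarith : (0:ℝ) ≤ (p:ℝ) - 3)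
        (by linarith : (0:ℝ) ≤ (p:ℝ) + 1)) (sq_nonneg ((p : ℝ) - 1))]
    subst hp2'
    have hn2 : n = 2 := by
      by_contra hne
      have hn3 : 3 ≤ n := by omega
      have h8 : (2 : ℝ) ^ 3 ≤ (2 : ℝ) ^ n := pow_le_pow_right₀ (by norm_num) hn3
      have h4 : (2 : ℝ) ^ 2 ≤ (2 : ℝ) ^ (n - 1) := pow_le_pow_right₀ (by norm_num) (by omega)
      push_cast at hle
      nlinarith
    exact ⟨rfl, hn2⟩
  · rintro ⟨rfl, rfl⟩
    norm_num [Real.sqrt_one]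
end
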